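/- Let τ_n, q_n > 0 with τ_n → 0 and α_n := τ_n/q_n → α > 0. Let X ~ Exp(1/α) and set X'_n = -X·τ_n/(α·log(1-q_n)) and Y_n = τ_n·⌈X'_n/τ_n⌉. Then Y_n/τ_n follows a Geom(q_n) distribution and E|Y_n - X| → 0 as n → ∞. -/

import Mathlib

open MeasureTheory Filter

/-- Jump-time coupling: if `X ~ Exp(1/α)`, `X'ₙ = -X·τₙ/(α log(1-qₙ))` and
`Yₙ = τₙ⌈X'ₙ/τₙ⌉`, then `Yₙ/τₙ ~ Geom(qₙ)` and `E|Yₙ - X| → 0`. -/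
theorem jump_time_coupling {Ω : Type*} [MeasurableSpace Ω]
    (μ : Measure Ω) [IsProbabilityMeasure μ]
    (α : ℝ) (hα : 0 < α) (τ q : ℕ → ℝ)
    (hτpos : ∀ n, 0 < τ n) (hq : ∀ n, q n ∈ Set.Ioo (0 : ℝ) 1)
    (hτ0 : Tendsto τ atTop (nhds 0))
    (hαn : Tendsto (fun n => τ n / q n) atTop (nhds α))
    (X : Ω → ℝ) (hXm : Measurable X)
    (hX : ∀ t : ℝ, 0 ≤ t → μ {ω | t < X ω} = ENNReal.ofReal (Real.exp (-t / α))) :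
    (∀ n, ∀ k : ℕ, 1 ≤ k →
      μ {ω | (k : ℤ) ≤ ⌈(-X ω * τ n / (α * Real.log (1 - q n))) / τ n⌉} =
        ENNReal.ofReal ((1 - q n) ^ (k - 1))) ∧
    Tendsto
      (fun n => ∫ ω,
        |τ n * ((⌈(-X ω * τ n / (α * Real.log (1 - q n))) / τ n⌉ : ℤ) : ℝ) - X ω| ∂μ)
      atTop (nhds 0) := by
  set L : ℕ → ℝ := fun n => Real.log (1 - q n) with hLdef
  have hLneg : ∀ n, L n < 0 := fun n =>
    Real.log_neg (by linarith [(hq n).2]) (by linarith [(hq n).1])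
  have hαL : ∀ n, α * L n < 0 := fun n => mul_neg_of_pos_of_neg hα (hLneg n)
  set b : ℕ → ℝ := fun n => -1 / (α * L n) with hbdef
  have hb : ∀ n, 0 < b n := fun n => by
    have : (1:ℝ) / (α * L n) < 0 := one_div_neg.mpr (hαL n)
    simpa [hbdef, neg_div] using neg_pos.mpr this
  have hrew : ∀ n x, (-x * τ n / (α * L n)) / τ n = x * b n := by
    intro n x
    have hτ := (hτpos n).ne'
    have hαL' := (hαL n).ne
    simp only [hbdef]
    field_simp
  simp only [hLdef] at hrew
  simp only [hrew]
  -- Part 1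
  have part1 : ∀ n, ∀ k : ℕ, 1 ≤ k →
      μ {ω | (k : ℤ) ≤ ⌈X ω * b n⌉} = ENNReal.ofReal ((1 - q n) ^ (k - 1)) := by
    intro n k hk
    have hset : {ω | (k : ℤ) ≤ ⌈X ω * b n⌉} = {ω | ((k:ℝ) - 1) / b n < X ω} := by
      ext ω
      simp only [Set.mem_setOf_eq]
      rw [show ((k:ℤ) ≤ ⌈X ω * b n⌉) ↔ ((k:ℤ) - 1 < ⌈X ω * b n⌉) from by omega,
        Int.lt_ceil, div_lt_iff₀ (hb n)]
      push_cast
      rfl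
    rw [hset, hX _ (div_nonneg (by simp; exact_mod_cast hk) (hb n).le)]
    congr 1
    have h1q : (0:ℝ) < 1 - q n := by linarith [(hq n).2]
    have hexp : -(((k:ℝ) - 1) / b n) / α = ((k:ℝ) - 1) * L n := by
      simp only [hbdef]
      field_simp [hbdef, (hαL n).ne, hα.ne']
    rw [hexp, show ((k:ℝ) - 1) = ((k - 1 : ℕ) : ℝ) by push_cast [hk]; ring,
      Real.exp_nat_mul, Real.exp_log h1q]
  refine ⟨part1, ?_⟩
  -- X > 0 a.e.
  have hXpos : ∀ᵐ ω ∂μ, 0 < X ω := by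
    have h1 : μ {ω | 0 < X ω} = 1 := by simpa using hX 0 le_rfl
    rw [ae_iff]
    have : {ω | ¬ 0 < X ω} = {ω | 0 < X ω}ᶜ := by ext; simp
    rw [this, measure_compl (measurableSet_lt measurable_const hXm) (measure_ne_top _ _), h1,
      measure_univ, tsub_self]
  have hXnn : 0 ≤ᵐ[μ] X := hXpos.mono fun ω h => h.le
  -- integrability of X
  have hint : Integrable X μ := by
    refine ⟨hXm.aestronglyMeasurable, ?_⟩
    rw [hasFiniteIntegral_iff_ofReal hXnn,
      lintegral_eq_lintegral_meas_lt μ hXnn hXm.aemeasurable]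
    calc ∫⁻ t in Set.Ioi 0, μ {a | t < X a}
        = ∫⁻ t in Set.Ioi 0, ENNReal.ofReal (Real.exp (-(1/α) * t)) := by
          apply setLIntegral_congr_fun measurableSet_Ioi
          intro t ht
          dsimp only
          rw [hX t (le_of_lt ht)]
          congr 1
          ring_nf
      _ < ⊤ := (exp_neg_integrableOn_Ioi 0 (by positivity : (0:ℝ) < 1/α)).lintegral_lt_top
  -- q n → 0
  have hq0 : Tendsto q atTop (nhds 0) := by
    have heq : q = fun n => τ n / (τ n / q n) := by
      funext n
      have h1 := (hτpos n).ne'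
      have h2 := (hq n).1.ne'
      field_simp
    rw [heq]
    have := hτ0.div hαn hα.ne'
    rw [zero_div] at this
    exact this
  -- slope of log at 1 along 1 - q n
  have hslope : Tendsto (fun n => L n / (-(q n))) atTop (nhds 1) := by
    have hd : HasDerivAt Real.log 1 1 := by simpa using Real.hasDerivAt_log one_ne_zero
    have h1 : Tendsto (fun n => (1:ℝ) - q n) atTop (nhdsWithin 1 {(1:ℝ)}ᶜ) := by
      apply tendsto_nhdsWithin_of_tendsto_nhds_of_eventually_within
      · simpa using (tendsto_const_nhds.sub hq0)
      · filter_upwards with n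
        simp only [Set.mem_compl_iff, Set.mem_singleton_iff]
        intro h
        have := (hq n).1
        linarith [sub_eq_self.mp h]
    have := (hasDerivAt_iff_tendsto_slope.mp hd).comp h1
    have heq : (slope Real.log 1 ∘ fun n => 1 - q n) = fun n => L n / (-(q n)) := by
      funext n
      simp only [Function.comp_apply, slope, Real.log_one, vsub_eq_sub, sub_zero,
        sub_sub_cancel_left, smul_eq_mul, hLdef]
      ring
    rwa [heq] at this
  -- τ n * b n → 1
  have hτb : Tendsto (fun n => τ n * b n) atTop (nhds 1) := by
    have h1 : Tendsto (fun n => q n / (-(L n))) atTop (nhds 1) := by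
      have : Tendsto (fun n => (L n / (-(q n)))⁻¹) atTop (nhds 1⁻¹) :=
        hslope.inv₀ one_ne_zero
      simp only [inv_one] at this
      convert this using 2 with n
      rw [inv_div]
      ring
    have h2 : Tendsto (fun n => (τ n / q n) * (q n / (-(L n))) / α) atTop (nhds 1) := by
      have := (hαn.mul h1).div_const α
      simpa [mul_one, div_self hα.ne'] using this
    convert h2 using 2 with n
    have hq' := (hq n).1.ne'
    have hL' := (hLneg n).ne
    rw [hbdef]
    field_simp
  -- a.e. bound
  have hbound : ∀ n, ∀ᵐ ω ∂μ, |τ n * (⌈X ω * b n⌉ : ℝ) - X ω| ≤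
      |τ n * b n - 1| * X ω + τ n := by
    intro n
    filter_upwards [hXpos] with ω hω
    have h1 : X ω * b n ≤ (⌈X ω * b n⌉ : ℝ) := Int.le_ceil _
    have h2 : (⌈X ω * b n⌉ : ℝ) < X ω * b n + 1 := Int.ceil_lt_add_one _
    have ht := hτpos n
    have h3 : τ n * (X ω * b n) ≤ τ n * (⌈X ω * b n⌉ : ℝ) :=
      mul_le_mul_of_nonneg_left h1 ht.le
    have h4 : τ n * (⌈X ω * b n⌉ : ℝ) ≤ τ n * (X ω * b n) + τ n := by nlinarith
    have hA : |τ n * (X ω * b n) - X ω| = |τ n * b n - 1| * X ω := by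
      rw [show τ n * (X ω * b n) - X ω = (τ n * b n - 1) * X ω by ring, abs_mul,
        abs_of_pos hω]
    rw [abs_le] at *
    constructor
    · nlinarith [neg_abs_le (τ n * (X ω * b n) - X ω), hA]
    · nlinarith [le_abs_self (τ n * (X ω * b n) - X ω), hA]
  -- measurability
  have hfm : ∀ n, AEStronglyMeasurable
      (fun ω => |τ n * (⌈X ω * b n⌉ : ℝ) - X ω|) μ := by
    intro n
    apply Measurable.aestronglyMeasurable
    apply Measurable.abs
    have hc : Measurable (fun ω => ((⌈X ω * b n⌉ : ℤ) : ℝ)) :=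
      measurable_from_top.comp ((hXm.mul_const (b n)).ceil)
    exact (measurable_const.mul hc).sub hXm
  -- integrability of integrand
  have hgint : ∀ n, Integrable (fun ω => |τ n * b n - 1| * X ω + τ n) μ :=
    fun n => (hint.const_mul _).add (integrable_const _)
  have hfint : ∀ n, Integrable
      (fun ω => |τ n * (⌈X ω * b n⌉ : ℝ) - X ω|) μ := by
    intro n
    refine (hgint n).mono' (hfm n) ?_
    filter_upwards [hbound n] with ω h
    simpa using h
  -- the bound on the integral
  have hle : ∀ n, ∫ ω, |τ n * (⌈X ω * b n⌉ : ℝ) - X ω| ∂μ ≤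
      |τ n * b n - 1| * (∫ ω, X ω ∂μ) + τ n := by
    intro n
    calc ∫ ω, |τ n * (⌈X ω * b n⌉ : ℝ) - X ω| ∂μ
        ≤ ∫ ω, (|τ n * b n - 1| * X ω + τ n) ∂μ :=
          integral_mono_ae (hfint n) (hgint n) (hbound n)
      _ = |τ n * b n - 1| * (∫ ω, X ω ∂μ) + τ n := by
          rw [integral_add (hint.const_mul _) (integrable_const _),
            integral_const_mul, integral_const, probReal_univ]
          simp
  have h0le : ∀ n, 0 ≤ ∫ ω, |τ n * (⌈X ω * b n⌉ : ℝ) - X ω| ∂μ :=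
    fun n => integral_nonneg fun ω => abs_nonneg _
  have hgl : Tendsto (fun n => |τ n * b n - 1| * (∫ ω, X ω ∂μ) + τ n)
      atTop (nhds 0) := by
    have h1 : Tendsto (fun n => τ n * b n - 1) atTop (nhds 0) := by
      simpa using hτb.sub_const 1
    have h2 : Tendsto (fun n => |τ n * b n - 1|) atTop (nhds 0) := by
      simpa using h1.abs
    simpa using (h2.mul_const (∫ ω, X ω ∂μ)).add hτ0
  exact squeeze_zero h0le hle hgl
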